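/- Let D be an m×n matrix over 𝔽₂ and let V, V′ be invertible upper-triangular n×n matrices such that R = D·V and R′ = D·V′ are both reduced. Then for every column index j, column j of R is zero if and only if column j of R′ is zero, and whenever these columns are nonzero, low(R,j) = low(R′,j). (Although a reduced matrix obtained from D by left-to-right column additions is not unique, its pivots are, so all reduced matrices produce the same persistence pairing.) -/

import Mathlib

open Matrix

/-- The `low` of column `j` of `R`: the largest row index `i` with `R i j ≠ 0`,
or `⊥` if the column is zero. -/
def low {m n : ℕ} (R : Matrix (Fin m) (Fin n) (ZMod 2)) (j : Fin n) : WithBot (Fin m) :=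
  (Finset.univ.filter fun i => R i j ≠ 0).max

/-- `R` is reduced if no two distinct nonzero columns have equal lows. -/
def Reduced {m n : ℕ} (R : Matrix (Fin m) (Fin n) (ZMod 2)) : Prop :=
  ∀ j₁ j₂ : Fin n, low R j₁ ≠ ⊥ → low R j₁ = low R j₂ → j₁ = j₂

/-- A square matrix is upper triangular if `V i j = 0` whenever `i > j`. -/
def UpperTri {k : ℕ} (V : Matrix (Fin k) (Fin k) (ZMod 2)) : Prop :=
  ∀ i j : Fin k, j < i → V i j = 0

/-- The `low` of a vector. -/
def vlow {m : ℕ} (v : Fin m → ZMod 2) : WithBot (Fin m) :=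
  (Finset.univ.filter fun i => v i ≠ 0).max

lemma le_low {m n : ℕ} {R : Matrix (Fin m) (Fin n) (ZMod 2)} {i : Fin m} {k : Fin n}
    (h : R i k ≠ 0) : (i : WithBot (Fin m)) ≤ low R k :=
  Finset.le_max (by simp [h])

/-- Key combinatorial lemma: the low of a combination of columns of a reduced
matrix is the sup of the lows of the participating columns. -/
lemma vlow_mulVec {m n : ℕ} {R : Matrix (Fin m) (Fin n) (ZMod 2)} (hR : Reduced R)
    (c : Fin n → ZMod 2) :
    vlow (R.mulVec c) = (Finset.univ.filter fun k => c k ≠ 0).sup (fun k => low R k) := by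
  apply le_antisymm
  · refine Finset.max_le ?_
    intro i hi
    simp only [Finset.mem_filter, Finset.mem_univ, true_and] at hi
    have : ∃ k, R i k * c k ≠ 0 := by
      by_contra h
      push_neg at h
      exact hi (by simpa [Matrix.mulVec, dotProduct] using
        Finset.sum_eq_zero fun k _ => h k)
    obtain ⟨k, hk⟩ := this
    have hck : c k ≠ 0 := fun h => hk (by simp [h])
    have hRik : R i k ≠ 0 := fun h => hk (by simp [h])
    calc (i : WithBot (Fin m)) ≤ low R k := le_low hRik
      _ ≤ _ := Finset.le_sup (by simp [hck])
  · set s := Finset.univ.filter fun k => c k ≠ 0 with hs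
    rcases eq_or_ne (s.sup fun k => low R k) ⊥ with h | h
    · simp [h]
    · have hsne : s.Nonempty := by
        by_contra hne
        rw [Finset.not_nonempty_iff_eq_empty] at hne
        simp [hne] at h
      obtain ⟨k0, hk0, hsup⟩ := Finset.exists_mem_eq_sup s hsne (fun k => low R k)
      rw [hsup] at h ⊢
      obtain ⟨i0, hi0⟩ := WithBot.ne_bot_iff_exists.mp h
      have hck0 : c k0 ≠ 0 := by simpa [hs] using hk0
      have hRi0 : R i0 k0 ≠ 0 := by
        have := Finset.mem_of_max (hi0.symm : low R k0 = (i0 : WithBot (Fin m)))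
        simpa using this
      have hval : R.mulVec c i0 = R i0 k0 * c k0 := by
        rw [Matrix.mulVec, dotProduct]
        apply Finset.sum_eq_single
        · intro k _ hkne
          by_cases hck : c k = 0
          · simp [hck]
          · have hkmem : k ∈ s := by simp [hs, hck]
            have hle : low R k ≤ (i0 : WithBot (Fin m)) := hi0 ▸ hsup ▸ Finset.le_sup hkmem
            have hne2 : low R k ≠ (i0 : WithBot (Fin m)) := by
              intro heq
              exact hkne (hR k k0 (heq ▸ WithBot.coe_ne_bot) (heq.trans hi0))
            have hlt : low R k < (i0 : WithBot (Fin m)) := lt_of_le_of_ne hle hne2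
            have : R i0 k = 0 := by
              by_contra hcon
              exact absurd (le_low hcon) (not_le.2 hlt)
            simp [this]
        · simp
      have : R.mulVec c i0 ≠ 0 := by
        rw [hval]
        exact mul_ne_zero hRi0 hck0
      rw [← hi0]
      exact Finset.le_max (by simp [this])

lemma mulVec_support_le {n : ℕ} {V : Matrix (Fin n) (Fin n) (ZMod 2)} (hVt : UpperTri V)
    {c : Fin n → ZMod 2} {j : Fin n} (hc : ∀ k, j < k → c k = 0) :
    ∀ k, j < k → V.mulVec c k = 0 := by
  intro k hk
  rw [Matrix.mulVec, dotProduct]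
  apply Finset.sum_eq_zero
  intro l _
  rcases le_or_gt l j with h | h
  · rw [hVt k l (lt_of_le_of_lt h hk), zero_mul]
  · rw [hc l h, mul_zero]

lemma upperTri_inv {n : ℕ} {V : Matrix (Fin n) (Fin n) (ZMod 2)} (hV : IsUnit V)
    (hVt : UpperTri V) : UpperTri V⁻¹ := by
  have hdet : IsUnit V.det := (Matrix.isUnit_iff_isUnit_det V).mp hV
  haveI : Invertible V := V.invertibleOfIsUnitDet hdet
  have hb : V.BlockTriangular (id : Fin n → Fin n) := fun i j h => hVt i j h
  have := Matrix.blockTriangular_inv_of_blockTriangular hb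
  exact fun i j h => this h

/-- For every nonzero column of one reduced form there is an earlier-or-equal
column of the other reduced form with the same low. -/
lemma exists_low_eq {m n : ℕ} (D : Matrix (Fin m) (Fin n) (ZMod 2))
    (V V' : Matrix (Fin n) (Fin n) (ZMod 2))
    (hV : IsUnit V) (hVt : UpperTri V)
    (hV' : IsUnit V') (hV't : UpperTri V')
    (hR' : Reduced (D * V')) (j : Fin n) (hj : low (D * V) j ≠ ⊥) :
    ∃ k : Fin n, k ≤ j ∧ low (D * V') k = low (D * V) j := by
  set c : Fin n → ZMod 2 := V.mulVec (Pi.single j 1) with hc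
  set c' : Fin n → ZMod 2 := V'⁻¹.mulVec c with hc'
  have hdet' : IsUnit V'.det := (Matrix.isUnit_iff_isUnit_det V').mp hV'
  -- the two combinations agree
  have hcomb : (D * V').mulVec c' = (D * V).mulVec (Pi.single j 1) := by
    rw [hc', hc, Matrix.mulVec_mulVec, Matrix.mul_nonsing_inv_cancel_right _ _ hdet',
      Matrix.mulVec_mulVec]
  -- support of c' is ≤ j
  have hsingle : ∀ k : Fin n, j < k → (Pi.single j 1 : Fin n → ZMod 2) k = 0 := by
    intro k hk
    rw [Pi.single_eq_of_ne (ne_of_gt hk)]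
  have hcs : ∀ k, j < k → c k = 0 := mulVec_support_le hVt hsingle
  have hcs' : ∀ k, j < k → c' k = 0 := mulVec_support_le (upperTri_inv hV' hV't) hcs
  -- low of the combination is low (D*V) j
  have hvlow : vlow ((D * V).mulVec (Pi.single j 1)) = low (D * V) j := by
    have : (D * V).mulVec (Pi.single j 1) = fun i => (D * V) i j := by
      simp [Matrix.mulVec_single]
      rfl
    rw [this]
    rfl
  have hkey := vlow_mulVec hR' c'
  rw [hcomb, hvlow] at hkey
  -- the sup is attained
  set s := Finset.univ.filter fun k => c' k ≠ 0 with hsdef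
  have hsne : s.Nonempty := by
    by_contra hne
    rw [Finset.not_nonempty_iff_eq_empty] at hne
    rw [hne] at hkey
    simp at hkey
    exact hj hkey
  obtain ⟨k0, hk0, hsup⟩ := Finset.exists_mem_eq_sup s hsne (fun k => low (D * V') k)
  refine ⟨k0, ?_, ?_⟩
  · by_contra hlt
    push_neg at hlt
    have : c' k0 = 0 := hcs' k0 hlt
    simp [hsdef, this] at hk0
  · rw [← hsup, ← hkey]

/-- uniqueness of pivots of reduced forms. -/
theorem stmt_1 {m n : ℕ} (D : Matrix (Fin m) (Fin n) (ZMod 2))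
    (V V' : Matrix (Fin n) (Fin n) (ZMod 2))
    (hV : IsUnit V) (hVt : UpperTri V)
    (hV' : IsUnit V') (hV't : UpperTri V')
    (hR : Reduced (D * V)) (hR' : Reduced (D * V')) :
    ∀ j : Fin n, low (D * V) j = low (D * V') j := by
  have main : ∀ N : ℕ, ∀ j : Fin n, j.val < N → low (D * V) j = low (D * V') j := by
    intro N
    induction N with
    | zero => intro j h; omega
    | succ N ih =>
      intro j hj
      rcases lt_or_eq_of_le (Nat.lt_succ_iff.mp hj) with hlt | heq
      · exact ih j hlt
      · by_cases h1 : low (D * V) j = ⊥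
        · by_cases h2 : low (D * V') j = ⊥
          · rw [h1, h2]
          · exfalso
            obtain ⟨k, hkj, hk⟩ := exists_low_eq D V' V hV' hV't hV hVt hR j h2
            rcases eq_or_lt_of_le hkj with rfl | hklt
            · exact h2 (hk.symm.trans h1)
            · have hkN : k.val < N := by omega
              have hik := ih k hkN
              have hne : low (D * V') k ≠ ⊥ := by
                rw [← hik, hk]; exact h2
              have : k = j := hR' k j hne (by rw [← hik, hk])
              omega
        · obtain ⟨k, hkj, hk⟩ := exists_low_eq D V V' hV hVt hV' hV't hR' j h1
          rcases eq_or_lt_of_le hkj with rfl | hklt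
          · exact hk.symm
          · exfalso
            have hkN : k.val < N := by omega
            have hik := ih k hkN
            have hne : low (D * V) k ≠ ⊥ := by
              rw [hik, hk]; exact h1
            have : k = j := hR k j hne (by rw [hik, hk])
            omega
  intro j
  exact main n j j.isLt
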